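/- The third y-derivative of W(y,ν,λ) equals 12ν²λ(2ν²λy + ν² + λ² − 1), and hence the second y-derivative attains its minimum over y ∈ ℝ at y₃ := (1−ν²−λ²)/(2ν²λ), with minimum value (1+ν+λ)(1+ν−λ)(λ²(3−2ν) − (1−ν)²(3+2ν)). -/

import Mathlib

noncomputable def W (v l y : ℝ) : ℝ :=
  l^2*v^4*y^4 + 2*l*v^2*(l^2 + v^2 - 1)*y^3
    - v*(1 - 2*v*l^2 - l^4 + v^4 - 2*v^2)*y^2
    + 2*v*l*(1 + l^2 - v^2)*y + l^2

lemma quartic_deriv (a b c d e : ℝ) :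
    deriv (fun y : ℝ => a*y^4 + b*y^3 + c*y^2 + d*y + e)
      = fun y => 4*a*y^3 + 3*b*y^2 + 2*c*y + d := by
  funext y
  have h4 := (hasDerivAt_pow 4 y).const_mul a
  have h3 := (hasDerivAt_pow 3 y).const_mul b
  have h2 := (hasDerivAt_pow 2 y).const_mul c
  have h1 := (hasDerivAt_id y).const_mul d
  have h := ((((h4.add h3).add h2).add h1).add_const e)
  have h' : HasDerivAt (fun y : ℝ => a*y^4 + b*y^3 + c*y^2 + d*y + e)
      (4*a*y^3 + 3*b*y^2 + 2*c*y + d) y := by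
    exact h.congr_deriv (by push_cast; ring)
  exact h'.deriv

lemma cubic_deriv (a b c d : ℝ) :
    deriv (fun y : ℝ => a*y^3 + b*y^2 + c*y + d)
      = fun y => 3*a*y^2 + 2*b*y + c := by
  funext y
  have h3 := (hasDerivAt_pow 3 y).const_mul a
  have h2 := (hasDerivAt_pow 2 y).const_mul b
  have h1 := (hasDerivAt_id y).const_mul c
  have h := (((h3.add h2).add h1).add_const d)
  have h' : HasDerivAt (fun y : ℝ => a*y^3 + b*y^2 + c*y + d)
      (3*a*y^2 + 2*b*y + c) y := by
    exact h.congr_deriv (by push_cast; ring)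
  exact h'.deriv

lemma quad_deriv (a b c : ℝ) :
    deriv (fun y : ℝ => a*y^2 + b*y + c) = fun y => 2*a*y + b := by
  funext y
  have h2 := (hasDerivAt_pow 2 y).const_mul a
  have h1 := (hasDerivAt_id y).const_mul b
  have h := ((h2.add h1).add_const c)
  have h' : HasDerivAt (fun y : ℝ => a*y^2 + b*y + c) (2*a*y + b) y := by
    exact h.congr_deriv (by push_cast; ring)
  exact h'.deriv

theorem stmt8 (v l : ℝ) (hv0 : 0 < v) (hv1 : v < 1) (hl : 0 < l) :
    (∀ y : ℝ, deriv (deriv (deriv (fun y => W v l y))) y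
        = 12*v^2*l*(2*v^2*l*y + v^2 + l^2 - 1)) ∧
    (∀ y : ℝ, deriv (deriv (fun y => W v l y)) ((1 - v^2 - l^2)/(2*v^2*l))
        ≤ deriv (deriv (fun y => W v l y)) y) ∧
    deriv (deriv (fun y => W v l y)) ((1 - v^2 - l^2)/(2*v^2*l))
        = (1 + v + l)*(1 + v - l)*(l^2*(3 - 2*v) - (1 - v)^2*(3 + 2*v)) := by
  set a := l^2*v^4 with ha
  set b := 2*l*v^2*(l^2 + v^2 - 1) with hb
  set c := -(v*(1 - 2*v*l^2 - l^4 + v^4 - 2*v^2)) with hc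
  set d := 2*v*l*(1 + l^2 - v^2) with hd
  have hW : (fun y => W v l y) = fun y : ℝ => a*y^4 + b*y^3 + c*y^2 + d*y + l^2 := by
    funext y; simp only [W, ha, hb, hc, hd]; ring
  have h1 : deriv (fun y => W v l y) = fun y : ℝ => (4*a)*y^3 + (3*b)*y^2 + (2*c)*y + d := by
    rw [hW, quartic_deriv]
  have h2 : deriv (deriv (fun y => W v l y)) = fun y : ℝ => (12*a)*y^2 + (6*b)*y + 2*c := by
    rw [h1]
    have := cubic_deriv (4*a) (3*b) (2*c) d
    rw [this]; funext y; ring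
  have h3 : deriv (deriv (deriv (fun y => W v l y))) = fun y : ℝ => (24*a)*y + 6*b := by
    rw [h2, quad_deriv]; funext y; ring
  have hv : v ≠ 0 := ne_of_gt hv0
  have hln : l ≠ 0 := ne_of_gt hl
  refine ⟨fun y => ?_, fun y => ?_, ?_⟩
  · rw [h3]; simp only [ha, hb]; ring
  · rw [h2]
    simp only
    have key : (12*a)*y^2 + (6*b)*y + 2*c
        - ((12*a)*((1 - v^2 - l^2)/(2*v^2*l))^2 + (6*b)*((1 - v^2 - l^2)/(2*v^2*l)) + 2*c)
        = 12*a*(y - (1 - v^2 - l^2)/(2*v^2*l))^2 := by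
      simp only [ha, hb]
      field_simp
      ring
    nlinarith [sq_nonneg (y - (1 - v^2 - l^2)/(2*v^2*l)), sq_nonneg (l*v^2),
      mul_pos (mul_pos hl hv0) hv0]
  · rw [h2]
    simp only [ha, hb, hc]
    field_simp
    ring
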